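/- Let f be a discrete Morse function on a digraph G, and let γ be an allowed elementary n-path in G. Then it cannot simultaneously hold that (i) there exists an allowed elementary (n−1)-path β < γ with f(β) = f(γ), and (ii) there exists an allowed elementary (n+1)-path α > γ with f(α) = f(γ). -/

import Mathlib

/-- A digraph: a vertex set together with an irreflexive edge relation supported on the
vertex set (edges are ordered pairs off the diagonal). -/
structure DiGraph (V : Type) where
  verts : Set V
  Edge : V → V → Prop
  edge_mem_left : ∀ u v, Edge u v → u ∈ verts
  edge_mem_right : ∀ u v, Edge u v → v ∈ verts
  edge_ne : ∀ u v, Edge u v → u ≠ v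

variable {V : Type}

/-- An allowed elementary path: a nonempty list of vertices of `G` such that each
consecutive pair is a directed edge of `G`. -/
def IsAllowed (G : DiGraph V) (p : List V) : Prop :=
  p ≠ [] ∧ (∀ v ∈ p, v ∈ G.verts) ∧ p.Chain' G.Edge

/-- `Del p q` : `p` is obtained from `q` by deleting one vertex. -/
def Del (p q : List V) : Prop := ∃ i < q.length, p = q.eraseIdx i

/-- Value of a function on vertices extended to a path: the sum over its vertices. -/
def fval (f : V → ℝ) (p : List V) : ℝ := (p.map f).sum

/-- A discrete Morse function on a digraph `G`: a nonnegative function on vertices such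
that for every allowed elementary path `p` there is (i) at most one allowed elementary
path obtained from `p` by deleting one vertex with the same `f`-value, and (ii) at most
one allowed elementary path obtained from `p` by inserting one vertex with the same
`f`-value. -/
def IsMorse (G : DiGraph V) (f : V → ℝ) : Prop :=
  (∀ v, 0 ≤ f v) ∧
  ∀ p, IsAllowed G p →
    ((∀ β β', IsAllowed G β → Del β p → fval f β = fval f p →
        IsAllowed G β' → Del β' p → fval f β' = fval f p → β = β') ∧
     (∀ α α', IsAllowed G α → Del p α → fval f α = fval f p →
        IsAllowed G α' → Del p α' → fval f α' = fval f p → α = α'))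

/-- An allowed elementary path is critical if no allowed path obtained by deleting one
vertex has the same `f`-value, and no allowed path obtained by inserting one vertex has
the same `f`-value. -/
def IsCritical (G : DiGraph V) (f : V → ℝ) (p : List V) : Prop :=
  (¬ ∃ β, IsAllowed G β ∧ Del β p ∧ fval f β = fval f p) ∧
  (¬ ∃ α, IsAllowed G α ∧ Del p α ∧ fval f α = fval f p)

/-- A directed loop: an allowed elementary path `v₀ v₁ ⋯ vₙ v₀` with `n ≥ 1`. -/
def IsLoop (G : DiGraph V) (p : List V) : Prop :=
  IsAllowed G p ∧ 3 ≤ p.length ∧ p.head? = p.getLast?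

/-- A simplicial allowed elementary path: all vertices distinct. -/
def Simplicial (G : DiGraph V) (p : List V) : Prop := IsAllowed G p ∧ p.Nodup

/-- A pair of the combinatorial discrete gradient vector field `M(G,f)`:
`β` is obtained from `α` by inserting one vertex, and `f(α) = f(β)`. -/
def MPair (G : DiGraph V) (f : V → ℝ) (α β : List V) : Prop :=
  IsAllowed G α ∧ IsAllowed G β ∧ Del α β ∧ fval f α = fval f β

/-- `H` is a sub-digraph of `G`. -/
def Subdigraph (H G : DiGraph V) : Prop :=
  H.verts ⊆ G.verts ∧ ∀ u v, H.Edge u v → G.Edge u v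

-- helpers
lemma fval_append (f : V → ℝ) (l r : List V) : fval f (l ++ r) = fval f l + fval f r := by
  simp [fval]

lemma fval_cons (f : V → ℝ) (x : V) (r : List V) : fval f (x :: r) = f x + fval f r := by
  simp [fval]

lemma eraseIdx_append_cons (l : List V) (x : V) (r : List V) :
    (l ++ x :: r).eraseIdx l.length = l ++ r := by
  induction l with
  | nil => simp [List.eraseIdx]
  | cons a l ih => simp [List.eraseIdx, ih]

lemma del_iff (p q : List V) : Del p q ↔ ∃ l x r, q = l ++ x :: r ∧ p = l ++ r := by
  constructor
  · rintro ⟨i, hi, rfl⟩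
    refine ⟨q.take i, q.get ⟨i, hi⟩, q.drop (i+1), ?_, List.eraseIdx_eq_take_drop_succ q i⟩
    conv_lhs => rw [← List.take_append_drop i q]
    rw [List.drop_eq_getElem_cons hi]; simp
  · rintro ⟨l, x, r, rfl, rfl⟩
    exact ⟨l.length, by simp, (eraseIdx_append_cons l x r).symm⟩

section chains
variable {E : V → V → Prop}

lemma chain_last {L T : List V} {x : V} (h : List.Chain' E (L ++ x :: T)) :
    List.Chain' E (L ++ [x]) := by
  simp only [List.Chain', List.isChain_append, List.isChain_cons, List.head?_cons, List.isChain_singleton] at *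
  aesop

lemma chain_take2 {L T : List V} {x y : V} (h : List.Chain' E (L ++ x :: y :: T)) :
    List.Chain' E (L ++ [x, y]) := by
  simp only [List.Chain', List.isChain_append, List.isChain_cons, List.head?_cons, List.isChain_singleton,
    List.isChain_cons_cons] at *
  aesop

lemma edge_adj {L T : List V} {x y : V} (h : List.Chain' E (L ++ x :: y :: T)) : E x y := by
  simp only [List.Chain', List.isChain_append, List.isChain_cons_cons] at h
  tauto

lemma chain_suffix {L T : List V} (h : List.Chain' E (L ++ T)) : List.Chain' E T :=
  (List.isChain_append.mp h).2.1

lemma chain_swapA {L M R : List V} {w v : V} (hM : M ≠ [])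
    (hα : List.Chain' E (L ++ w :: (M ++ v :: R)))
    (hβ : List.Chain' E ((L ++ M) ++ R)) :
    List.Chain' E (L ++ w :: (M ++ R)) := by
  obtain ⟨m, M', rfl⟩ := List.exists_cons_of_ne_nil hM
  simp only [List.Chain', List.isChain_append, List.isChain_cons_cons, List.cons_append, List.isChain_cons,
    List.head?_append, List.head?_cons, List.getLast?_append, List.getLast?_cons] at *
  aesop

lemma chain_swapB {L N R : List V} {w v : V} (hN : N ≠ [])
    (hα : List.Chain' E ((L ++ v :: N) ++ w :: R))
    (hβ : List.Chain' E (L ++ (N ++ R))) :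
    List.Chain' E (L ++ (N ++ w :: R)) := by
  obtain ⟨n, N', rfl⟩ := List.exists_cons_of_ne_nil hN
  simp only [List.Chain', List.isChain_append, List.isChain_cons_cons, List.cons_append, List.isChain_cons,
    List.head?_append, List.head?_cons, List.getLast?_append, List.getLast?_cons] at *
  cases N' <;> aesop

end chains

/-- Let `f` be a discrete Morse function on a digraph `G` and `γ` an
allowed elementary path. Then it cannot simultaneously hold that some allowed path
obtained from `γ` by deleting one vertex has the same `f`-value and some allowed path
obtained from `γ` by inserting one vertex has the same `f`-value. -/
theorem not_both_collapsible (G : DiGraph V) (f : V → ℝ) (hf : IsMorse G f)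
    (γ : List V) (hγ : IsAllowed G γ) :
    ¬ ((∃ β, IsAllowed G β ∧ Del β γ ∧ fval f β = fval f γ) ∧
       (∃ α, IsAllowed G α ∧ Del γ α ∧ fval f α = fval f γ)) := by
  rintro ⟨⟨β, hβa, hβd, hβv⟩, ⟨α, hαa, hαd, hαv⟩⟩
  obtain ⟨hf0, hfm⟩ := hf
  obtain ⟨L, w, R, hα_eq, hγ_eq1⟩ := (del_iff _ _).mp hαd
  obtain ⟨L', v, R', hγ_eq2, hβ_eq⟩ := (del_iff _ _).mp hβd
  subst hα_eq hβ_eq hγ_eq1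
  -- now γ is L ++ R; hγ_eq2 : L ++ R = L' ++ v :: R'
  have hfw : f w = 0 := by
    simp only [fval_append, fval_cons] at hαv; linarith
  have hfv : f v = 0 := by
    rw [hγ_eq2] at hβv
    simp only [fval_append, fval_cons] at hβv; linarith
  have hmemα : ∀ x ∈ L ++ w :: R, x ∈ G.verts := hαa.2.1
  have hchα : (L ++ w :: R).Chain' G.Edge := hαa.2.2
  have hchβ : (L' ++ R').Chain' G.Edge := hβa.2.2
  have hsplit : (∃ M, L' = L ++ M ∧ R = M ++ v :: R') ∨
      (∃ N, L = L' ++ v :: N ∧ R' = N ++ R) := by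
    rcases List.append_eq_append_iff.mp hγ_eq2 with ⟨M, h1, h2⟩ | ⟨c, h1, h2⟩
    · exact Or.inl ⟨M, h1, h2⟩
    · cases c with
      | nil => exact Or.inl ⟨[], by simpa using h1.symm, by simpa using h2.symm⟩
      | cons x c' =>
        obtain ⟨hx, hR'⟩ := List.cons.injEq .. ▸ h2
        subst hx
        exact Or.inr ⟨c', h1, hR'⟩
  rcases hsplit with ⟨M, hL', hR⟩ | ⟨N, hL, hR'⟩
  · subst hL' hR
    cases M with
    | nil =>
      -- bad case: α = L ++ w :: v :: R', use p = L ++ [w, v]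
      simp only [List.nil_append] at *
      have hp : IsAllowed G (L ++ [w, v]) := by
        refine ⟨by simp, fun x hx => hmemα x ?_, chain_take2 hchα⟩
        simp at hx ⊢; tauto
      have hδ1 : IsAllowed G (L ++ [v]) := by
        refine ⟨by simp, fun x hx => hmemα x ?_, ?_⟩
        · simp at hx ⊢; tauto
        · have : (L ++ v :: R').Chain' G.Edge := hγ_eq2 ▸ hγ.2.2
          exact chain_last this
      have hδ2 : IsAllowed G (L ++ [w]) := by
        refine ⟨by simp, fun x hx => hmemα x ?_, chain_last hchα⟩
        simp at hx ⊢; tauto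
      have hd1 : Del (L ++ [v]) (L ++ [w, v]) :=
        (del_iff _ _).mpr ⟨L, w, [v], rfl, rfl⟩
      have hd2 : Del (L ++ [w]) (L ++ [w, v]) :=
        (del_iff _ _).mpr ⟨L ++ [w], v, [], by simp, by simp⟩
      have heq := (hfm _ hp).1 _ _ hδ1 hd1 (by simp [fval_append, fval_cons, hfv, hfw])
        hδ2 hd2 (by simp [fval_append, fval_cons, hfv, hfw])
      have hvw : v = w := by
        have := List.append_cancel_left heq
        simpa using this
      exact G.edge_ne w v (edge_adj hchα) hvw.symm
    | cons m M' =>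
      -- diamond: γ' = L ++ w :: (m :: M' ++ R')
      have hMne : (m :: M') ≠ [] := by simp
      have hch' : (L ++ w :: (m :: M' ++ R')).Chain' G.Edge :=
        chain_swapA hMne hchα hchβ
      have hγ'a : IsAllowed G (L ++ w :: (m :: M' ++ R')) := by
        refine ⟨by simp, fun x hx => hmemα x ?_, hch'⟩
        simp at hx ⊢; tauto
      have hd' : Del (L ++ w :: (m :: M' ++ R')) (L ++ w :: (m :: M' ++ v :: R')) :=
        (del_iff _ _).mpr ⟨L ++ w :: m :: M', v, R', by simp, by simp⟩
      have heq := (hfm _ hαa).1 _ _ hγ hαd hαv.symm hγ'a hd'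
        (by simp [fval_append, fval_cons, hfv])
      -- γ = L ++ (m :: M' ++ v :: R'), γ' = L ++ w :: (m :: M' ++ R')
      have h2 : m :: M' ++ v :: R' = w :: (m :: M' ++ R') :=
        List.append_cancel_left heq
      have hmw : m = w := by
        have := congrArg List.head? h2
        simpa using this
      exact G.edge_ne w m (edge_adj hchα) hmw.symm
  · subst hL hR'
    cases N with
    | nil =>
      -- bad case: α = (L' ++ [v]) ++ w :: R, use p = v :: w :: R
      simp only [List.nil_append] at *
      have hchα' : (L' ++ v :: w :: R).Chain' G.Edge := by
        simpa using hchα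
      have hp : IsAllowed G (v :: w :: R) := by
        refine ⟨by simp, fun x hx => hmemα x ?_, chain_suffix hchα'⟩
        simp at hx ⊢; tauto
      have hδ1 : IsAllowed G (w :: R) := by
        refine ⟨by simp, fun x hx => hmemα x ?_, ?_⟩
        · simp at hx ⊢; tauto
        · have := chain_suffix hchα'
          exact (List.isChain_cons.mp this).2
      have hδ2 : IsAllowed G (v :: R) := by
        refine ⟨by simp, fun x hx => hmemα x ?_, ?_⟩
        · simp at hx ⊢; tauto
        · have hchγ : (L' ++ v :: R).Chain' G.Edge := by
            have := hγ.2.2; simpa using this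
          exact chain_suffix hchγ
      have hd1 : Del (w :: R) (v :: w :: R) :=
        (del_iff _ _).mpr ⟨[], v, w :: R, rfl, rfl⟩
      have hd2 : Del (v :: R) (v :: w :: R) :=
        (del_iff _ _).mpr ⟨[v], w, R, rfl, rfl⟩
      have heq := (hfm _ hp).1 _ _ hδ1 hd1 (by simp [fval_cons, hfv, hfw])
        hδ2 hd2 (by simp [fval_cons, hfv, hfw])
      have hvw : w = v := by simpa using heq
      exact G.edge_ne v w (edge_adj hchα') hvw.symm
    | cons n N' =>
      -- diamond: γ' = L' ++ (n :: N' ++ w :: R)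
      have hNne : (n :: N') ≠ [] := by simp
      have hch' : (L' ++ (n :: N' ++ w :: R)).Chain' G.Edge :=
        chain_swapB hNne hchα hchβ
      have hγ'a : IsAllowed G (L' ++ (n :: N' ++ w :: R)) := by
        refine ⟨by simp, fun x hx => hmemα x ?_, hch'⟩
        simp at hx ⊢; tauto
      have hd' : Del (L' ++ (n :: N' ++ w :: R)) ((L' ++ v :: n :: N') ++ w :: R) :=
        (del_iff _ _).mpr ⟨L', v, n :: N' ++ w :: R, by simp, rfl⟩
      have heq := (hfm _ hαa).1 _ _ hγ hαd hαv.symm hγ'a hd'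
        (by simp [fval_append, fval_cons, hfv])
      -- γ = (L' ++ v :: n :: N') ++ R, γ' = L' ++ (n :: N' ++ w :: R)
      have h2 : v :: n :: N' ++ R = n :: N' ++ w :: R := by
        have : L' ++ (v :: n :: N' ++ R) = L' ++ (n :: N' ++ w :: R) := by
          simpa using heq
        exact List.append_cancel_left this
      have hvn : v = n := by
        have := congrArg List.head? h2
        simpa using this
      have hE : G.Edge v n := by
        have : (L' ++ v :: n :: (N' ++ w :: R)).Chain' G.Edge := by simpa using hchα
        exact edge_adj this
      exact G.edge_ne v n hE hvn
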